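/- Let f : ℝ^d → ℝ be continuous and p-coercive for some p > 0, with a unique global minimizer x* and minimum value f_min = f(x*). Suppose f is sharp on a neighborhood U of x*, i.e., there exists η > 0 with f(x) − f_min ≥ η ‖x − x*‖ for all x ∈ U. Then for every x ∈ ℝ^d there exists t_0 > 0 such that for all t ≥ t_0, prox_{tf}(x) is a singleton; in fact prox_{tf}(x) = {x*} for all t ≥ t_0. -/

import Mathlib

open Filter

set_option maxHeartbeats 1000000

private lemma add_div_le_add_div_iff' {t a b c e : ℝ} (ht : 0 < t) :
    a + c / t ≤ b + e / t ↔ t * a + c ≤ t * b + e := by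
  rw [← sub_nonneg, ← sub_nonneg (a := t * b + e)]
  have h : b + e / t - (a + c / t) = (t * b + e - (t * a + c)) / t := by
    field_simp
  rw [h, le_div_iff₀ ht, zero_mul]

/-- Proposition 3.3(3). If `f : ℝ^d → ℝ` is continuous, `p`-coercive,
has a unique global minimizer `x*`, and is sharp on a neighborhood `U` of `x*`
(`f z - f x* ≥ η ‖z - x*‖` on `U` for some `η > 0`), then for every `x` there exists
`t₀ > 0` such that for all `t ≥ t₀`, `prox_{tf}(x) = {x*}`. -/
theorem prox_single_valued_of_sharp {d : ℕ}
    (f : EuclideanSpace ℝ (Fin d) → ℝ) (p : ℝ) (hp : 0 < p)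
    (hcont : Continuous f)
    (hcoer : Tendsto (fun z : EuclideanSpace ℝ (Fin d) => f z / ‖z‖ ^ p)
      (comap norm atTop) atTop)
    (xstar : EuclideanSpace ℝ (Fin d)) (hmin : ∀ z, f xstar ≤ f z)
    (huniq : ∀ z, (∀ w, f z ≤ f w) → z = xstar)
    (U : Set (EuclideanSpace ℝ (Fin d))) (hU : U ∈ nhds xstar)
    (η : ℝ) (hη : 0 < η)
    (hsharp : ∀ z ∈ U, η * ‖z - xstar‖ ≤ f z - f xstar) :
    ∀ x : EuclideanSpace ℝ (Fin d), ∃ t₀ > (0 : ℝ), ∀ t ≥ t₀,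
      {z : EuclideanSpace ℝ (Fin d) | ∀ w,
        f z + ‖z - x‖ ^ 2 / (2 * t) ≤ f w + ‖w - x‖ ^ 2 / (2 * t)} = {xstar} := by
  classical
  -- strict minimality off xstar
  have hpos : ∀ w, w ≠ xstar → f xstar < f w := by
    intro w hw
    rcases lt_or_eq_of_le (hmin w) with h | h
    · exact h
    · exact absurd (huniq w (fun v => h ▸ hmin v)) hw
  -- a closed ball inside U
  obtain ⟨ε, hε, hball⟩ := Metric.mem_nhds_iff.mp hU
  set r : ℝ := ε / 2 with hrdef
  have hr0 : 0 < r := by positivity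
  have hballU : Metric.closedBall xstar r ⊆ U := by
    intro z hz
    apply hball
    rw [Metric.mem_closedBall] at hz
    rw [Metric.mem_ball]
    linarith
  -- coercivity gives R with f large outside ball of radius R
  set A : ℝ := |f xstar| + 1 with hAdef
  have hA0 : 0 < A := by positivity
  have h1 : ∀ᶠ z in comap norm atTop, A ≤ f z / ‖z‖ ^ p :=
    hcoer.eventually (eventually_ge_atTop A)
  rw [eventually_comap] at h1
  obtain ⟨R, hR⟩ := eventually_atTop.mp h1
  set R' : ℝ := max R 1 with hR'def
  have hfarR : ∀ z : EuclideanSpace ℝ (Fin d), R' ≤ ‖z‖ → f xstar + 1 ≤ f z := by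
    intro z hz
    have h2 : A ≤ f z / ‖z‖ ^ p := hR ‖z‖ (le_trans (le_max_left R 1) hz) z rfl
    have hz1 : (1 : ℝ) ≤ ‖z‖ := le_trans (le_max_right R 1) hz
    have hzp : (1 : ℝ) ≤ ‖z‖ ^ p := Real.one_le_rpow hz1 hp.le
    have hp0 : (0 : ℝ) < ‖z‖ ^ p := lt_of_lt_of_le one_pos hzp
    have h3 : A * ‖z‖ ^ p ≤ f z := (le_div_iff₀ hp0).mp h2
    have h4 : f xstar ≤ |f xstar| := le_abs_self _
    nlinarith
  -- positive gap outside the small ball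
  have hδ : ∃ δ : ℝ, 0 < δ ∧ ∀ w : EuclideanSpace ℝ (Fin d),
      r ≤ ‖w - xstar‖ → f xstar + δ ≤ f w := by
    set K : Set (EuclideanSpace ℝ (Fin d)) :=
      Metric.closedBall 0 R' ∩ (Metric.ball xstar r)ᶜ with hKdef
    by_cases hK : K.Nonempty
    · have hKc : IsCompact K :=
        (isCompact_closedBall (0 : EuclideanSpace ℝ (Fin d)) R').inter_right
          Metric.isOpen_ball.isClosed_compl
      obtain ⟨w₀, hw₀K, hw₀min⟩ := hKc.exists_isMinOn hK hcont.continuousOn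
      have hw₀ne : w₀ ≠ xstar := by
        intro h
        have := hw₀K.2
        rw [h] at this
        exact this (Metric.mem_ball_self hr0)
      have hgap : 0 < f w₀ - f xstar := by
        have := hpos w₀ hw₀ne; linarith
      refine ⟨min (f w₀ - f xstar) 1, lt_min hgap one_pos, ?_⟩
      intro w hw
      by_cases hwR : ‖w‖ ≤ R'
      · have hwK : w ∈ K := by
          constructor
          · rw [Metric.mem_closedBall, dist_zero_right]; exact hwR
          · rw [Set.mem_compl_iff, Metric.mem_ball, dist_eq_norm]
            push_neg; exact hw
        have := hw₀min hwK
        have h5 : min (f w₀ - f xstar) 1 ≤ f w₀ - f xstar := min_le_left _ _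
        simp only [Set.mem_setOf_eq] at this
        linarith [this]
      · push_neg at hwR
        have := hfarR w hwR.le
        have h5 : min (f w₀ - f xstar) 1 ≤ 1 := min_le_right _ _
        linarith
    · refine ⟨1, one_pos, ?_⟩
      intro w hw
      by_cases hwR : ‖w‖ ≤ R'
      · exfalso
        apply hK
        refine ⟨w, ?_, ?_⟩
        · rw [Metric.mem_closedBall, dist_zero_right]; exact hwR
        · rw [Set.mem_compl_iff, Metric.mem_ball, dist_eq_norm]
          push_neg; exact hw
      · push_neg at hwR
        exact hfarR w hwR.le
  obtain ⟨δ, hδ0, hfar⟩ := hδ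
  intro x
  set C : ℝ := ‖xstar - x‖ with hCdef
  have hC0 : 0 ≤ C := norm_nonneg _
  set B : ℝ := 2 * C + r with hBdef
  have hB0 : 0 < B := by positivity
  refine ⟨max ((B + 1) / (2 * η)) ((C ^ 2 + 1) / (2 * δ)), ?_, ?_⟩
  · apply lt_max_iff.mpr
    left
    positivity
  intro t ht
  have ht1 : (B + 1) / (2 * η) ≤ t := le_trans (le_max_left _ _) ht
  have ht2 : (C ^ 2 + 1) / (2 * δ) ≤ t := le_trans (le_max_right _ _) ht
  have htη : B + 1 ≤ 2 * t * η := by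
    have := (div_le_iff₀ (by positivity : (0:ℝ) < 2 * η)).mp ht1
    linarith
  have htδ : C ^ 2 + 1 ≤ 2 * t * δ := by
    have := (div_le_iff₀ (by positivity : (0:ℝ) < 2 * δ)).mp ht2
    linarith
  have ht0 : 0 < t := by nlinarith
  have h2t : (0 : ℝ) < 2 * t := by positivity
  ext z
  simp only [Set.mem_setOf_eq, Set.mem_singleton_iff]
  constructor
  · intro hz
    by_contra hzx
    have hd : 0 < ‖z - xstar‖ := by
      rw [norm_pos_iff, sub_ne_zero]; exact hzx
    have hkey : 2 * t * f z + ‖z - x‖ ^ 2 ≤ 2 * t * f xstar + ‖xstar - x‖ ^ 2 :=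
      (add_div_le_add_div_iff' h2t).mp (hz xstar)
    -- triangle facts
    have tri1 : C ≤ ‖z - xstar‖ + ‖z - x‖ := by
      have := dist_triangle xstar z x
      rw [dist_eq_norm, dist_eq_norm, dist_eq_norm] at this
      rw [norm_sub_rev xstar z] at this
      linarith [this]
    have tri2 : ‖z - x‖ ≤ ‖z - xstar‖ + C := by
      have := dist_triangle z xstar x
      rw [dist_eq_norm, dist_eq_norm, dist_eq_norm] at this
      linarith [this]
    by_cases hcase : ‖z - xstar‖ ≤ r
    · have hzU : z ∈ U := hballU (by rw [Metric.mem_closedBall, dist_eq_norm]; exact hcase)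
      have hsh := hsharp z hzU
      -- chain of inequalities
      have e1 : C ^ 2 - ‖z - x‖ ^ 2 ≤ ‖z - xstar‖ * (C + ‖z - x‖) := by
        nlinarith [mul_le_mul_of_nonneg_right (show C - ‖z - x‖ ≤ ‖z - xstar‖ by linarith)
          (show (0:ℝ) ≤ C + ‖z - x‖ by positivity)]
      have e2 : C + ‖z - x‖ ≤ B := by
        rw [hBdef]; linarith
      have e3 : ‖z - xstar‖ * (C + ‖z - x‖) ≤ ‖z - xstar‖ * B :=
        mul_le_mul_of_nonneg_left e2 hd.le
      have e4 : (B + 1) * ‖z - xstar‖ ≤ 2 * t * η * ‖z - xstar‖ :=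
        mul_le_mul_of_nonneg_right htη hd.le
      have e5 : 2 * t * (η * ‖z - xstar‖) ≤ 2 * t * (f z - f xstar) :=
        mul_le_mul_of_nonneg_left hsh h2t.le
      nlinarith
    · push_neg at hcase
      have hf := hfar z hcase.le
      have e5 : 2 * t * δ ≤ 2 * t * (f z - f xstar) := by
        apply mul_le_mul_of_nonneg_left _ h2t.le
        linarith
      linarith [sq_nonneg ‖z - x‖]
  · intro hz
    rw [hz]
    intro w
    rw [add_div_le_add_div_iff' h2t]
    have tri1 : C ≤ ‖w - xstar‖ + ‖w - x‖ := by
      have := dist_triangle xstar w x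
      rw [dist_eq_norm, dist_eq_norm, dist_eq_norm] at this
      rw [norm_sub_rev xstar w] at this
      linarith [this]
    have tri2 : ‖w - x‖ ≤ ‖w - xstar‖ + C := by
      have := dist_triangle w xstar x
      rw [dist_eq_norm, dist_eq_norm, dist_eq_norm] at this
      linarith [this]
    have hw0 : 0 ≤ ‖w - xstar‖ := norm_nonneg _
    by_cases hcase : ‖w - xstar‖ ≤ r
    · have hwU : w ∈ U := hballU (by rw [Metric.mem_closedBall, dist_eq_norm]; exact hcase)
      have hsh := hsharp w hwU
      have e1 : C ^ 2 - ‖w - x‖ ^ 2 ≤ ‖w - xstar‖ * (C + ‖w - x‖) := by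
        nlinarith [mul_le_mul_of_nonneg_right (show C - ‖w - x‖ ≤ ‖w - xstar‖ by linarith)
          (show (0:ℝ) ≤ C + ‖w - x‖ by positivity)]
      have e2 : C + ‖w - x‖ ≤ B := by rw [hBdef]; linarith
      have e3 : ‖w - xstar‖ * (C + ‖w - x‖) ≤ ‖w - xstar‖ * B :=
        mul_le_mul_of_nonneg_left e2 hw0
      have e4 : B * ‖w - xstar‖ ≤ 2 * t * η * ‖w - xstar‖ :=
        mul_le_mul_of_nonneg_right (by linarith) hw0
      have e5 : 2 * t * (η * ‖w - xstar‖) ≤ 2 * t * (f w - f xstar) :=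
        mul_le_mul_of_nonneg_left hsh h2t.le
      nlinarith
    · push_neg at hcase
      have hf := hfar w hcase.le
      have e5 : 2 * t * δ ≤ 2 * t * (f w - f xstar) := by
        apply mul_le_mul_of_nonneg_left _ h2t.le
        linarith
      linarith [sq_nonneg ‖w - x‖]
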